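/- Let S be a semigroup and F a field such that the map J ↦ ϱ_J, sending each ideal J of F[S] to the restriction to S of the congruence on F[S] induced by J, is a homomorphism from (Con(F[S]), ∘) into the semigroup of binary relations (B_S, ∘). Then S is a permutable semigroup. -/

import Mathlib

/-- `J` is a two-sided ideal: a subspace closed under left and right multiplication. -/
def IsTwoSidedIdeal {F A : Type*} [Field F] [NonUnitalNonAssocSemiring A]
    [Module F A] (J : Submodule F A) : Prop :=
  ∀ a x : A, x ∈ J → a * x ∈ J ∧ x * a ∈ J

/-- `ϱ_J`: the restriction to `S` of the congruence on the semigroup algebra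
`F[S]` induced by an ideal `J` (`x ~ y` iff `x - y ∈ J`). -/
def rho {F S : Type*} [Field F] [Semigroup S]
    (J : Submodule F (MonoidAlgebra F S)) : S → S → Prop :=
  fun s t => MonoidAlgebra.single s (1 : F) - MonoidAlgebra.single t (1 : F) ∈ J

section Aux
variable {F S : Type*} [Field F] [Semigroup S] (α : Con S)

/-- The quotient map as a `MulHom`. -/
def conMulHom : S →ₙ* α.Quotient := ⟨fun s => (s : α.Quotient), fun _ _ => rfl⟩

/-- The ideal `F[α]`: kernel of the induced map `F[S] → F[S/α]`. -/
def conIdeal (F : Type*) [Field F] : Submodule F (MonoidAlgebra F S) where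
  carrier := {x | MonoidAlgebra.mapDomain (conMulHom α) x = 0}
  add_mem' := by
    intro a b ha hb
    show MonoidAlgebra.mapDomain (conMulHom α) (a + b) = 0
    rw [MonoidAlgebra.mapDomain_add]
    rw [show MonoidAlgebra.mapDomain (conMulHom α) a = 0 from ha,
      show MonoidAlgebra.mapDomain (conMulHom α) b = 0 from hb, add_zero]
  zero_mem' := by
    show MonoidAlgebra.mapDomain (conMulHom α) (0 : MonoidAlgebra F S) = 0
    exact MonoidAlgebra.mapDomain_zero _
  smul_mem' := by
    intro c x hx
    show MonoidAlgebra.mapDomain (conMulHom α) (c • x) = 0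
    rw [MonoidAlgebra.mapDomain_smul, show MonoidAlgebra.mapDomain (conMulHom α) x = 0 from hx, smul_zero]

lemma mem_conIdeal {x : MonoidAlgebra F S} :
    x ∈ conIdeal α F ↔ MonoidAlgebra.mapDomain (conMulHom α) x = 0 := Iff.rfl

lemma conIdeal_twoSided : IsTwoSidedIdeal (conIdeal α F) := by
  intro a x hx
  rw [mem_conIdeal] at hx
  constructor <;> rw [mem_conIdeal]
  · show MonoidAlgebra.mapDomain (conMulHom α) (a * x) = 0
    rw [MonoidAlgebra.mapDomain_mul (conMulHom α),
      show MonoidAlgebra.mapDomain (conMulHom α) x = 0 from hx, mul_zero]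
  · show MonoidAlgebra.mapDomain (conMulHom α) (x * a) = 0
    rw [MonoidAlgebra.mapDomain_mul (conMulHom α),
      show MonoidAlgebra.mapDomain (conMulHom α) x = 0 from hx, zero_mul]

lemma rho_conIdeal : rho (conIdeal α F) = ⇑α := by
  funext s t
  rw [eq_iff_iff]
  have key : rho (conIdeal α F) s t ↔
      MonoidAlgebra.single ((s : α.Quotient)) (1 : F) = MonoidAlgebra.single ((t : α.Quotient)) (1 : F) := by
    rw [rho, mem_conIdeal,
      show MonoidAlgebra.mapDomain (conMulHom α)
          (MonoidAlgebra.single s (1:F) - MonoidAlgebra.single t (1:F))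
          = MonoidAlgebra.mapDomain (conMulHom α) (MonoidAlgebra.single s (1:F))
            - MonoidAlgebra.mapDomain (conMulHom α) (MonoidAlgebra.single t (1:F)) from
        map_sub (MonoidAlgebra.mapDomainNonUnitalRingHom F (conMulHom α)) _ _, MonoidAlgebra.mapDomain_single,
      MonoidAlgebra.mapDomain_single, sub_eq_zero]
    exact Iff.rfl
  rw [key]
  constructor
  · intro hst
    exact α.eq.mp (MonoidAlgebra.single_left_injective (one_ne_zero (α := F)) hst)
  · intro hst
    rw [α.eq.mpr hst]

end Aux

/-- If the map `J ↦ ϱ_J` is a homomorphism from `(Con(F[S]), ∘)` into the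
semigroup of binary relations on `S`, then `S` is a permutable semigroup.
(The congruence on `F[S]` obtained by composing the congruences of two ideals
`J₁, J₂` is the congruence of `J₁ + J₂`, so the homomorphism property reads
`ϱ_{J₁+J₂} = ϱ_{J₁} ∘ ϱ_{J₂}`.) -/
theorem permutable_of_rho_hom {F S : Type*} [Field F] [Semigroup S]
    (h : ∀ J₁ J₂ : Submodule F (MonoidAlgebra F S),
      IsTwoSidedIdeal J₁ → IsTwoSidedIdeal J₂ →
        rho (J₁ ⊔ J₂) = Relation.Comp (rho J₁) (rho J₂)) :
    ∀ α β : Con S, Relation.Comp ⇑α ⇑β = Relation.Comp ⇑β ⇑α := by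
  intro α β
  have hα := conIdeal_twoSided α (F := F)
  have hβ := conIdeal_twoSided β (F := F)
  calc Relation.Comp ⇑α ⇑β
      = Relation.Comp (rho (conIdeal α F)) (rho (conIdeal β F)) := by
        rw [rho_conIdeal, rho_conIdeal]
    _ = rho (conIdeal α F ⊔ conIdeal β F) := (h _ _ hα hβ).symm
    _ = rho (conIdeal β F ⊔ conIdeal α F) := by rw [sup_comm]
    _ = Relation.Comp (rho (conIdeal β F)) (rho (conIdeal α F)) := h _ _ hβ hα
    _ = Relation.Comp ⇑β ⇑α := by rw [rho_conIdeal, rho_conIdeal]
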